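/- For all odd integers n ≥ 3, the polynomials AExc_n^+(t) = ∑_{π even in S_n} t^{exc(π)} and AExc_n^-(t) = ∑_{π odd in S_n} t^{exc(π)} are palindromic of degree n-1; that is, their coefficient of t^k equals the coefficient of t^{n-1-k} for all k. For even n ≥ 2 they are not palindromic. -/

import Mathlib

open Finset Polynomial
open Equiv Equiv.Perm

/-- Number of excedances of a permutation of `{0,…,n-1}`. -/
def excA {n : ℕ} (π : Equiv.Perm (Fin n)) : ℕ :=
  (Finset.univ.filter (fun i => i < π i)).card

/-- Number of inversions. -/
def invA {n : ℕ} (π : Equiv.Perm (Fin n)) : ℕ :=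
  (Finset.univ.filter (fun p : Fin n × Fin n => p.1 < p.2 ∧ π p.2 < π p.1)).card

/-- `AExc_n^+(t)`, the excedance polynomial over even permutations. -/
noncomputable def AexcPt (n : ℕ) : Polynomial ℚ :=
  ∑ π ∈ Finset.univ.filter (fun π : Equiv.Perm (Fin n) => Even (invA π)),
    (Polynomial.X : Polynomial ℚ) ^ excA π

/-- `AExc_n^-(t)`, the excedance polynomial over odd permutations. -/
noncomputable def AexcMt (n : ℕ) : Polynomial ℚ :=
  ∑ π ∈ Finset.univ.filter (fun π : Equiv.Perm (Fin n) => ¬ Even (invA π)),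
    (Polynomial.X : Polynomial ℚ) ^ excA π

/-- A polynomial with coefficients `a_0,…,a_{n-1}` is palindromic if
`a_k = a_{n-1-k}` for all `k ≤ n-1`. -/
def PalindromicDeg (f : Polynomial ℚ) (N : ℕ) : Prop :=
  ∀ k ≤ N, f.coeff k = f.coeff (N - k)

lemma signAux_eq_sign {n : ℕ} (π : Equiv.Perm (Fin n)) : signAux π = sign π := by
  refine Equiv.Perm.swap_induction_on π ?_ ?_
  · rw [signAux_one, Equiv.Perm.sign_one]
  · intro f x y hxy ih
    rw [signAux_mul, Equiv.Perm.sign_mul, ih, signAux_swap hxy, sign_swap hxy]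

lemma sign_eq_pow_invA {n : ℕ} (π : Equiv.Perm (Fin n)) :
    sign π = (-1 : ℤˣ) ^ invA π := by
  rw [← signAux_eq_sign]
  unfold signAux
  rw [Finset.prod_ite, Finset.prod_const, Finset.prod_const, one_pow, mul_one]
  congr 1
  apply Finset.card_bij (fun x _ => (x.2, x.1))
  · intro x hx
    simp only [Finset.mem_filter, mem_finPairsLT] at hx
    simp only [Finset.mem_filter, Finset.mem_univ, true_and]
    refine ⟨hx.1, lt_of_le_of_ne hx.2 ?_⟩
    exact fun h => absurd (π.injective h) (ne_of_gt hx.1)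
  · intro x hx y hy h
    simp only [Prod.mk.injEq] at h
    exact Sigma.ext h.2 (heq_of_eq h.1)
  · intro p hp
    simp only [Finset.mem_filter, Finset.mem_univ, true_and] at hp
    exact ⟨⟨p.2, p.1⟩, by
      simp only [Finset.mem_filter, mem_finPairsLT]
      exact ⟨hp.1, le_of_lt hp.2⟩, rfl⟩

lemma even_invA_iff {n : ℕ} (π : Equiv.Perm (Fin n)) :
    Even (invA π) ↔ sign π = 1 := by
  rw [sign_eq_pow_invA]
  exact (neg_one_pow_eq_one_iff_even (by decide : (-1 : ℤˣ) ≠ 1)).symm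

lemma excA_le {n : ℕ} (π : Equiv.Perm (Fin (n + 1))) : excA π ≤ n := by
  have h : (Finset.univ.filter (fun i => i < π i)) ⊆
      Finset.univ.erase (Fin.last n) := by
    intro i hi
    simp only [Finset.mem_filter, Finset.mem_univ, true_and] at hi
    refine Finset.mem_erase.2 ⟨?_, Finset.mem_univ _⟩
    rintro rfl
    exact absurd hi (not_lt.2 (Fin.le_last _))
  have := Finset.card_le_card h
  rwa [Finset.card_erase_of_mem (Finset.mem_univ _), Finset.card_univ,
    Fintype.card_fin, Nat.add_sub_cancel] at this

lemma excA_inv_mul_rot {n : ℕ} (π : Equiv.Perm (Fin (n + 1))) :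
    excA (π⁻¹ * finRotate (n + 1)) = n - excA π := by
  have key : (Finset.univ.filter (fun i => i < (π⁻¹ * finRotate (n + 1)) i)).card
      = ((Finset.univ.filter (fun j => π j ≤ j)).erase (π⁻¹ 0)).card := by
    apply Finset.card_bij (fun i _ => π⁻¹ (finRotate (n + 1) i))
    · intro i hi
      rw [Finset.mem_filter] at hi
      simp only [Finset.mem_filter, Finset.mem_univ, true_and,
        Equiv.Perm.mul_apply] at hi
      have hlast : i < Fin.last n := lt_of_lt_of_le hi (Fin.le_last _)
      have hval : ((finRotate (n + 1)) i : ℕ) = (i : ℕ) + 1 := by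
        rw [finRotate_succ_apply, Fin.val_add_one_of_lt hlast]
      refine Finset.mem_erase.2 ⟨?_, ?_⟩
      · intro h
        have h0 : finRotate (n + 1) i = (0 : Fin (n + 1)) := by
          have := congrArg π h
          simpa using this
        rw [Fin.ext_iff, hval] at h0
        simp at h0
      · simp only [Finset.mem_filter, Finset.mem_univ, true_and,
          Equiv.Perm.coe_inv, Equiv.apply_symm_apply]
        have : ((finRotate (n + 1)) i : ℕ) ≤ (π⁻¹ ((finRotate (n + 1)) i) : ℕ) := by
          rw [hval]
          exact Nat.succ_le_of_lt hi
        exact this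
    · intro i₁ h₁ i₂ h₂ h
      exact (finRotate (n + 1)).injective (π⁻¹.injective h)
    · intro j hj
      rw [Finset.mem_erase, Finset.mem_filter] at hj
      obtain ⟨hne, _, hle⟩ := hj
      have hx0 : π j ≠ 0 := by
        intro h
        exact hne (by rw [← h, Equiv.Perm.coe_inv, Equiv.symm_apply_apply])
      refine ⟨π j - 1, ?_, ?_⟩
      · simp only [Finset.mem_filter, Finset.mem_univ, true_and,
          Equiv.Perm.mul_apply, finRotate_succ_apply, sub_add_cancel,
          Equiv.Perm.coe_inv, Equiv.symm_apply_apply]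
        rw [Fin.lt_iff_val_lt_val, Fin.coe_sub_one, if_neg hx0]
        have h1 : 1 ≤ (π j : ℕ) := Nat.one_le_iff_ne_zero.2
          (fun h => hx0 (Fin.ext h))
        omega
      · simp only [finRotate_succ_apply, sub_add_cancel, Equiv.Perm.coe_inv, Equiv.symm_apply_apply]
  have hsplit : (Finset.univ.filter (fun j : Fin (n+1) => π j ≤ j)).card
      = n + 1 - excA π := by
    have h := Finset.card_filter_add_card_filter_not
      (s := (Finset.univ : Finset (Fin (n+1)))) (p := fun j => j < π j)
    have heq : Finset.univ.filter (fun j : Fin (n+1) => ¬ j < π j)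
        = Finset.univ.filter (fun j => π j ≤ j) := by
      apply Finset.filter_congr; intro j _; simp [not_lt]
    rw [heq] at h
    rw [Finset.card_univ, Fintype.card_fin] at h
    unfold excA
    omega
  have hmem : π⁻¹ 0 ∈ Finset.univ.filter (fun j : Fin (n+1) => π j ≤ j) := by
    simp [Fin.zero_le]
  have h2 : excA (π⁻¹ * finRotate (n + 1))
      = ((Finset.univ.filter (fun j => π j ≤ j)).erase (π⁻¹ 0)).card := key
  rw [h2, Finset.card_erase_of_mem hmem, hsplit]
  have := excA_le π
  omega

lemma excA_eq_zero_iff {n : ℕ} (π : Equiv.Perm (Fin n)) : excA π = 0 ↔ π = 1 := by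
  constructor
  · intro h
    have hall : ∀ i : Fin n, π i ≤ i := by
      intro i
      by_contra hlt
      rw [not_le] at hlt
      have : i ∈ Finset.univ.filter (fun i => i < π i) := by simp [hlt]
      rw [Finset.card_eq_zero.1 h] at this
      exact absurd this (Finset.notMem_empty _)
    have hfix : ∀ m : ℕ, ∀ i : Fin n, (i : ℕ) ≤ m → π i = i := by
      intro m
      induction m with
      | zero =>
        intro i hi
        have h1 : (π i : ℕ) ≤ (i : ℕ) := hall i
        exact Fin.ext (by omega)
      | succ m ih =>
        intro i hi
        rcases eq_or_lt_of_le (hall i) with h | h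
        · exact h
        · exfalso
          have hj : ((π i : Fin n) : ℕ) ≤ m := by
            have := Fin.lt_iff_val_lt_val.1 h
            omega
          have : π (π i) = π i := ih (π i) hj
          have := π.injective this
          rw [this] at h
          exact lt_irrefl _ h
    exact Equiv.ext fun i => (hfix (i : ℕ) i le_rfl).trans (Equiv.Perm.one_apply i).symm
  · rintro rfl
    unfold excA
    rw [Finset.card_eq_zero, Finset.filter_eq_empty_iff]
    intro i _
    simp

lemma excA_eq_n_iff {n : ℕ} (π : Equiv.Perm (Fin (n + 1))) :
    excA π = n ↔ π = finRotate (n + 1) := by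
  constructor
  · intro h
    have := excA_inv_mul_rot π
    rw [h, Nat.sub_self] at this
    have h1 := (excA_eq_zero_iff _).1 this
    exact inv_mul_eq_one.1 h1
  · rintro rfl
    have h := excA_inv_mul_rot (1 : Equiv.Perm (Fin (n+1)))
    rw [(excA_eq_zero_iff (1 : Equiv.Perm (Fin (n+1)))).2 rfl, Nat.sub_zero,
      inv_one, one_mul] at h
    exact h

lemma coeff_sum_exc {n : ℕ} (s : Finset (Equiv.Perm (Fin n))) (k : ℕ) :
    (∑ π ∈ s, (X : Polynomial ℚ) ^ excA π).coeff k
      = ((s.filter fun π => excA π = k).card : ℚ) := by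
  rw [Polynomial.finset_sum_coeff]
  simp only [Polynomial.coeff_X_pow]
  rw [Finset.sum_boole]
  congr 1
  congr 1
  apply Finset.filter_congr
  intro π _
  exact ⟨fun h => h.symm, fun h => h.symm⟩

lemma sign_ne_one_iff {n : ℕ} (π : Equiv.Perm (Fin n)) :
    ¬ Equiv.Perm.sign π = 1 ↔ Equiv.Perm.sign π = -1 := by
  rcases Int.units_eq_one_or (Equiv.Perm.sign π) with h | h <;> simp [h]

lemma card_sign_exc {n : ℕ} (h2 : Even n) (ε : ℤˣ) (k : ℕ) (hk : k ≤ n) :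
    (Finset.univ.filter fun π : Equiv.Perm (Fin (n+1)) =>
        Equiv.Perm.sign π = ε ∧ excA π = k).card
    = (Finset.univ.filter fun π : Equiv.Perm (Fin (n+1)) =>
        Equiv.Perm.sign π = ε ∧ excA π = n - k).card := by
  have hsc : Equiv.Perm.sign (finRotate (n+1)) = 1 := by
    rw [sign_finRotate]; exact Even.neg_one_pow h2
  apply Finset.card_bij (fun π _ => π⁻¹ * finRotate (n+1))
  · intro π hπ
    simp only [Finset.mem_filter, Finset.mem_univ, true_and] at hπ ⊢
    refine ⟨?_, ?_⟩
    · rw [Equiv.Perm.sign_mul, Equiv.Perm.sign_inv, hπ.1, hsc, mul_one]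
    · rw [excA_inv_mul_rot, hπ.2]
  · intro π₁ h₁ π₂ h₂ h
    have := mul_right_cancel h
    exact inv_injective this
  · intro τ hτ
    simp only [Finset.mem_filter, Finset.mem_univ, true_and] at hτ
    refine ⟨finRotate (n+1) * τ⁻¹, ?_, ?_⟩
    · simp only [Finset.mem_filter, Finset.mem_univ, true_and]
      have hφ : (finRotate (n+1) * τ⁻¹)⁻¹ * finRotate (n+1) = τ := by group
      constructor
      · rw [Equiv.Perm.sign_mul, hsc, Equiv.Perm.sign_inv, hτ.1, one_mul]
      · have h3 := excA_inv_mul_rot (finRotate (n+1) * τ⁻¹)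
        rw [hφ, hτ.2] at h3
        have h4 := excA_le (finRotate (n+1) * τ⁻¹)
        omega
    · group

lemma coeff_P {n : ℕ} (k : ℕ) :
    (AexcPt (n+1)).coeff k
      = ((Finset.univ.filter fun π : Equiv.Perm (Fin (n+1)) =>
          Equiv.Perm.sign π = 1 ∧ excA π = k).card : ℚ) := by
  rw [AexcPt, coeff_sum_exc, Finset.filter_filter]
  congr 2
  apply Finset.filter_congr
  intro π _
  rw [even_invA_iff]

lemma coeff_M {n : ℕ} (k : ℕ) :
    (AexcMt (n+1)).coeff k
      = ((Finset.univ.filter fun π : Equiv.Perm (Fin (n+1)) =>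
          Equiv.Perm.sign π = -1 ∧ excA π = k).card : ℚ) := by
  rw [AexcMt, coeff_sum_exc, Finset.filter_filter]
  congr 2
  apply Finset.filter_congr
  intro π _
  rw [even_invA_iff, sign_ne_one_iff]

theorem stmt6 :
    (∀ n : ℕ, 3 ≤ n → Odd n →
      PalindromicDeg (AexcPt n) (n - 1) ∧ PalindromicDeg (AexcMt n) (n - 1)) ∧
    (∀ n : ℕ, 2 ≤ n → Even n →
      ¬ PalindromicDeg (AexcPt n) (n - 1) ∧ ¬ PalindromicDeg (AexcMt n) (n - 1)) := by
  constructor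
  · intro n hn hodd
    obtain ⟨m, rfl⟩ : ∃ m, n = m + 1 := ⟨n - 1, by omega⟩
    have hm : Even m := by
      rcases Nat.even_or_odd m with h | h
      · exact h
      · exact absurd h (Nat.odd_add_one.1 hodd)
    rw [Nat.add_sub_cancel]
    constructor
    · intro k hk
      rw [coeff_P, coeff_P, card_sign_exc hm 1 k hk]
    · intro k hk
      rw [coeff_M, coeff_M, card_sign_exc hm (-1) k hk]
  · intro n hn heven
    obtain ⟨m, rfl⟩ : ∃ m, n = m + 1 := ⟨n - 1, by omega⟩
    have hm : Odd m := by
      rcases Nat.even_or_odd m with h | h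
      · exact absurd heven (by simpa using Nat.odd_add_one.2 (Nat.not_odd_iff_even.2 h))
      · exact h
    have hsc : Equiv.Perm.sign (finRotate (m+1)) = -1 := by
      rw [sign_finRotate]; exact Odd.neg_one_pow hm
    rw [Nat.add_sub_cancel]
    have hP0 : (Finset.univ.filter fun π : Equiv.Perm (Fin (m+1)) =>
        Equiv.Perm.sign π = 1 ∧ excA π = 0) = {1} := by
      ext π
      simp only [Finset.mem_filter, Finset.mem_univ, true_and, Finset.mem_singleton]
      constructor
      · rintro ⟨_, h0⟩; exact (excA_eq_zero_iff π).1 h0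
      · rintro rfl
        exact ⟨Equiv.Perm.sign_one, (excA_eq_zero_iff 1).2 rfl⟩
    have hPm : (Finset.univ.filter fun π : Equiv.Perm (Fin (m+1)) =>
        Equiv.Perm.sign π = 1 ∧ excA π = m) = ∅ := by
      rw [Finset.filter_eq_empty_iff]
      rintro π - ⟨hs, hm'⟩
      rw [(excA_eq_n_iff π).1 hm'] at hs
      rw [hsc] at hs
      exact absurd hs (by decide)
    have hM0 : (Finset.univ.filter fun π : Equiv.Perm (Fin (m+1)) =>
        Equiv.Perm.sign π = -1 ∧ excA π = 0) = ∅ := by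
      rw [Finset.filter_eq_empty_iff]
      rintro π - ⟨hs, h0⟩
      rw [(excA_eq_zero_iff π).1 h0, Equiv.Perm.sign_one] at hs
      exact absurd hs (by decide)
    have hMm : (Finset.univ.filter fun π : Equiv.Perm (Fin (m+1)) =>
        Equiv.Perm.sign π = -1 ∧ excA π = m) = {finRotate (m+1)} := by
      ext π
      simp only [Finset.mem_filter, Finset.mem_univ, true_and, Finset.mem_singleton]
      constructor
      · rintro ⟨_, h0⟩; exact (excA_eq_n_iff π).1 h0
      · rintro rfl
        exact ⟨hsc, (excA_eq_n_iff _).2 rfl⟩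
    constructor
    · intro hpal
      have := hpal 0 (Nat.zero_le _)
      rw [Nat.sub_zero, coeff_P, coeff_P, hP0, hPm] at this
      simp at this
    · intro hpal
      have := hpal 0 (Nat.zero_le _)
      rw [Nat.sub_zero, coeff_M, coeff_M, hM0, hMm] at this
      simp at this
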